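/- In the mutual inactivation Notch-Delta model, for any positive parameters γ, k_c, k_t, γ_R and positive steady-state values N*, D*, the 2×2 block A_1 = [[-γ - D*/K, -N*/k_c - λ N*/k_t], [-D*/k_c - λ D*/k_t, -γ - N*/K]] with K := k_c k_t/(k_c + k_t) is Hurwitz for every λ ∈ [-1, 1]; in particular, the zeroth-order coefficient of its characteristic polynomial, γ² + (γ/K)(N* + D*) + (N*D*/(k_c²k_t²))[k_c²(1-λ²) + 2k_c k_t(1-λ)], is nonnegative and the trace is negative. -/
import Mathlib


open Matrix

lemma spec_fin_two (a b c d : ℝ) (μ : ℂ)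
    (h : μ ∈ spectrum ℂ ((!![a, b; c, d]).map (fun x : ℝ => (x : ℂ)))) :
    μ ^ 2 - ((a + d : ℝ) : ℂ) * μ + ((a * d - b * c : ℝ) : ℂ) = 0 := by
  rw [spectrum.mem_iff, Matrix.isUnit_iff_isUnit_det, isUnit_iff_ne_zero, not_not,
    Matrix.det_fin_two] at h
  simp [Matrix.algebraMap_matrix_apply] at h
  push_cast
  ring_nf
  ring_nf at h
  linear_combination h

lemma quad_root_neg (T Δ : ℝ) (hT : T < 0) (hΔ : 0 < Δ) (μ : ℂ)
    (h : μ ^ 2 - (T : ℂ) * μ + (Δ : ℂ) = 0) : μ.re < 0 := by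
  have hre := congrArg Complex.re h
  have him := congrArg Complex.im h
  simp [pow_two, Complex.mul_re, Complex.mul_im] at hre him
  have him' : μ.im * (2 * μ.re - T) = 0 := by linarith [him]
  rcases mul_eq_zero.mp him' with h0 | h0
  · rw [h0] at hre
    nlinarith [sq_nonneg μ.re]
  · linarith

theorem stmt18 (γ γR kc kt Ns Ds lam : ℝ)
    (hγ : 0 < γ) (hγR : 0 < γR) (hkc : 0 < kc) (hkt : 0 < kt)
    (hNs : 0 < Ns) (hDs : 0 < Ds) (hlam : lam ∈ Set.Icc (-1 : ℝ) 1) :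
    (∀ μ ∈ spectrum ℂ
        ((!![-γ - Ds / (kc * kt / (kc + kt)), -Ns / kc - lam * Ns / kt;
            -Ds / kc - lam * Ds / kt, -γ - Ns / (kc * kt / (kc + kt))]).map
          (fun x : ℝ => (x : ℂ))),
      μ.re < 0) ∧
    0 ≤ γ ^ 2 + (γ / (kc * kt / (kc + kt))) * (Ns + Ds) +
        (Ns * Ds / (kc ^ 2 * kt ^ 2)) *
          (kc ^ 2 * (1 - lam ^ 2) + 2 * kc * kt * (1 - lam)) ∧
    Matrix.trace
        !![-γ - Ds / (kc * kt / (kc + kt)), -Ns / kc - lam * Ns / kt;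
          -Ds / kc - lam * Ds / kt, -γ - Ns / (kc * kt / (kc + kt))] < 0 := by
  obtain ⟨hl1, hl2⟩ := hlam
  set K : ℝ := kc * kt / (kc + kt) with hK
  have hkck : 0 < kc + kt := by linarith
  have hK0 : 0 < K := by positivity
  set a : ℝ := -γ - Ds / K with ha
  set b : ℝ := -Ns / kc - lam * Ns / kt with hb
  set c : ℝ := -Ds / kc - lam * Ds / kt with hc
  set d : ℝ := -γ - Ns / K with hd
  have hT : a + d < 0 := by
    have : 0 < Ds / K := by positivity
    have : 0 < Ns / K := by positivity
    simp [ha, hd]; nlinarith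
  have hDet : a * d - b * c =
      γ ^ 2 + (γ / K) * (Ns + Ds) +
        (Ns * Ds / (kc ^ 2 * kt ^ 2)) *
          (kc ^ 2 * (1 - lam ^ 2) + 2 * kc * kt * (1 - lam)) := by
    simp only [ha, hb, hc, hd, hK]
    field_simp
    ring
  have hDetPos : 0 < a * d - b * c := by
    rw [hDet]
    have h1 : 0 ≤ (Ns * Ds / (kc ^ 2 * kt ^ 2)) *
        (kc ^ 2 * (1 - lam ^ 2) + 2 * kc * kt * (1 - lam)) := by
      apply mul_nonneg (by positivity)
      have : 0 ≤ 1 - lam ^ 2 := by nlinarith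
      have : 0 ≤ 1 - lam := by linarith
      positivity
    have h2 : 0 < (γ / K) * (Ns + Ds) := by positivity
    nlinarith [sq_nonneg γ]
  refine ⟨?_, ?_, ?_⟩
  · intro μ hμ
    exact quad_root_neg (a + d) (a * d - b * c) hT hDetPos μ (spec_fin_two a b c d μ hμ)
  · rw [← hDet]; exact hDetPos.le
  · rw [Matrix.trace_fin_two]
    simpa [← ha, ← hd] using hT
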